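/- Under the trust-bias click model, the intervention-aware per-click correction is an unbiased indicator of relevance: for any set of logging policies Π_T = {π_1, …, π_T} and item d with E_{t,ȳ}[α_d | Π_T] ≠ 0, the expectation over a uniformly random timestep t, the displayed ranking ȳ ~ π_t, and the (Bernoulli) click c(d) of the quantity (c(d) − E_{t,ȳ}[β_d | Π_T]) / E_{t,ȳ}[α_d | Π_T] equals r(d). -/

import Mathlib

/-- The intervention-aware per-click correction
`(c(d) − E_{t,ȳ}[β_d | Π_T]) / E_{t,ȳ}[α_d | Π_T]` is an unbiased indicator of relevance:
its expectation over a uniformly random timestep `t`, the displayed ranking `ȳ ~ π_t`, and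
the Bernoulli click `c(d)` equals `r(d)`. -/
theorem intervention_aware_correction_unbiased
    {D Y : Type*} [Fintype D] [Fintype Y]
    (T : ℕ) (hT : 0 < T)
    (π : Fin T → Y → ℝ)
    (hπ0 : ∀ t y, 0 ≤ π t y) (hπ1 : ∀ t, ∑ y, π t y = 1)
    (α β : D → Y → ℝ) (r : D → ℝ)
    (hr : ∀ d, 0 ≤ r d ∧ r d ≤ 1)
    (hclick : ∀ d y, 0 ≤ α d y * r d + β d y ∧ α d y * r d + β d y ≤ 1)
    (d : D)
    (hα : (1 / (T : ℝ)) * ∑ t, ∑ y, π t y * α d y ≠ 0) :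
    (1 / (T : ℝ)) * ∑ t, ∑ y, π t y *
        ((α d y * r d + β d y) *
            ((1 - (1 / (T : ℝ)) * ∑ t', ∑ y', π t' y' * β d y') /
              ((1 / (T : ℝ)) * ∑ t', ∑ y', π t' y' * α d y')) +
          (1 - (α d y * r d + β d y)) *
            ((0 - (1 / (T : ℝ)) * ∑ t', ∑ y', π t' y' * β d y') /
              ((1 / (T : ℝ)) * ∑ t', ∑ y', π t' y' * α d y')))
      = r d := by
  have hT0 : (T : ℝ) ≠ 0 := Nat.cast_ne_zero.mpr hT.ne'
  set A : ℝ := (1 / (T : ℝ)) * ∑ t, ∑ y, π t y * α d y with hAdef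
  set B : ℝ := (1 / (T : ℝ)) * ∑ t, ∑ y, π t y * β d y with hBdef
  have hA : A ≠ 0 := hα
  have key : ∀ (t : Fin T) (y : Y),
      π t y * ((α d y * r d + β d y) * ((1 - B) / A) +
        (1 - (α d y * r d + β d y)) * ((0 - B) / A))
      = (π t y * (α d y * r d + β d y) - π t y * B) / A := by
    intro t y
    field_simp
    ring
  simp_rw [key, ← Finset.sum_div, Finset.sum_sub_distrib]
  have h1 : ∑ t : Fin T, ∑ y, π t y * B = T * B := by
    simp [← Finset.sum_mul, hπ1]
  have h2 : ∑ t : Fin T, ∑ y, π t y * (α d y * r d + β d y)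
      = ((T : ℝ) * A) * r d + (T : ℝ) * B := by
    have hSα : ∑ t : Fin T, ∑ y, π t y * α d y = (T : ℝ) * A := by
      rw [hAdef]; field_simp
    have hSβ : ∑ t : Fin T, ∑ y, π t y * β d y = (T : ℝ) * B := by
      rw [hBdef]; field_simp
    calc ∑ t : Fin T, ∑ y, π t y * (α d y * r d + β d y)
        = (∑ t : Fin T, ∑ y, π t y * α d y) * r d
          + ∑ t : Fin T, ∑ y, π t y * β d y := by
          simp_rw [mul_add, Finset.sum_add_distrib, Finset.sum_mul, mul_assoc]
      _ = ((T : ℝ) * A) * r d + (T : ℝ) * B := by rw [hSα, hSβ]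
  rw [h1, h2]
  field_simp
  ring
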